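/- Let h be an exponential random variable with rate 1 and let d be the distance of a uniformly random point in a disc of radius ρ from the center. Then the CDF of u = h/(1+d^α) is F_u(x) = 1 − (δ/ρ²)·exp(−x)·γ(δ, x·ρ^α)/x^δ, where δ = 2/α and γ is the lower incomplete gamma function. -/

import Mathlib

open Real MeasureTheory

/-- Lower incomplete gamma function `γ(a,x) = ∫₀ˣ t^{a-1} e^{-t} dt`. -/
noncomputable def lowerGamma (a x : ℝ) : ℝ := ∫ t in (0:ℝ)..x, t ^ (a - 1) * Real.exp (-t)

/-- The law of an `Exp(1)` random variable. -/
noncomputable def expMeasure : Measure ℝ :=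
  (volume.restrict (Set.Ioi (0:ℝ))).withDensity fun t => ENNReal.ofReal (Real.exp (-t))

/-- Uniform distribution on the disc of radius `ρ` centered at the origin of the plane. -/
noncomputable def unifDisc (ρ : ℝ) : Measure (EuclideanSpace ℝ (Fin 2)) :=
  (ENNReal.ofReal (Real.pi * ρ ^ 2))⁻¹ • volume.restrict (Metric.ball 0 ρ)

section AuxLemmas
open Set

lemma expMeasure_Iio {c : ℝ} (hc : 0 ≤ c) :
    expMeasure (Set.Iio c) = ENNReal.ofReal (1 - Real.exp (-c)) := by
  rw [expMeasure, withDensity_apply _ measurableSet_Iio,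
    Measure.restrict_restrict measurableSet_Iio]
  have h1 : Set.Iio c ∩ Set.Ioi 0 = Set.Ioo 0 c := by ext t; simp [and_comm]
  rw [h1, ← ofReal_integral_eq_lintegral_ofReal]
  · congr 1
    rw [← integral_Ioc_eq_integral_Ioo, ← intervalIntegral.integral_of_le hc]
    rw [intervalIntegral.integral_comp_neg fun t => Real.exp t,
      integral_exp]
    simp
  · exact ((exp_neg_integrableOn_Ioi 0 one_pos).mono_set Set.Ioo_subset_Ioi_self).congr
      (by filter_upwards with t; simp)
  · filter_upwards with t using (Real.exp_pos _).le

lemma subst_lemma (ρ α x : ℝ) (hρ : 0 < ρ) (hα : 2 < α) (hx : 0 < x) :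
    (∫ t in Ioo (0:ℝ) (x * ρ ^ α), t ^ (2/α - 1) * Real.exp (-t)) =
      (α * x ^ (2/α)) * ∫ y in Ioo (0:ℝ) ρ, y * Real.exp (-(x * y ^ α)) := by
  have hα0 : (0:ℝ) < α := by linarith
  have himg : (fun y : ℝ => x * y ^ α) '' Ioo 0 ρ = Ioo 0 (x * ρ ^ α) := by
    ext t
    constructor
    · rintro ⟨y, ⟨hy0, hyρ⟩, rfl⟩
      exact ⟨mul_pos hx (Real.rpow_pos_of_pos hy0 α),
        mul_lt_mul_of_pos_left (Real.rpow_lt_rpow hy0.le hyρ hα0) hx⟩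
    · rintro ⟨ht0, htρ⟩
      refine ⟨(t / x) ^ (1/α), ⟨Real.rpow_pos_of_pos (div_pos ht0 hx) _, ?_⟩, ?_⟩
      · have h1 : t / x < ρ ^ α := (div_lt_iff₀' hx).2 htρ
        by_contra h
        push_neg at h
        have := Real.rpow_le_rpow hρ.le h hα0.le
        rw [← Real.rpow_mul (div_pos ht0 hx).le, one_div_mul_cancel hα0.ne',
          Real.rpow_one] at this
        linarith
      · show x * ((t / x) ^ (1/α)) ^ α = t
        rw [← Real.rpow_mul (div_pos ht0 hx).le, one_div_mul_cancel hα0.ne',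
          Real.rpow_one, mul_div_cancel₀ _ hx.ne']
  have hderiv : ∀ y ∈ Ioo (0:ℝ) ρ, HasDerivWithinAt (fun y : ℝ => x * y ^ α)
      (x * (α * y ^ (α - 1))) (Ioo 0 ρ) y := fun y hy =>
    ((Real.hasDerivAt_rpow_const (Or.inl hy.1.ne')).const_mul x).hasDerivWithinAt
  have hinj : InjOn (fun y : ℝ => x * y ^ α) (Ioo 0 ρ) := by
    intro a ha b hb hab
    simp only [mul_eq_mul_left_iff] at hab
    rcases hab with hab | hab
    · exact Real.rpow_left_injOn hα0.ne' (mem_setOf.2 ha.1.le) (mem_setOf.2 hb.1.le) hab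
    · exact absurd hab hx.ne'
  rw [← himg, MeasureTheory.integral_image_eq_integral_abs_deriv_smul measurableSet_Ioo
    hderiv hinj, ← integral_const_mul]
  refine setIntegral_congr_fun measurableSet_Ioo fun y hy => ?_
  have hy0 := hy.1
  have habs : |x * (α * y ^ (α - 1))| = x * (α * y ^ (α - 1)) :=
    abs_of_pos (mul_pos hx (mul_pos hα0 (Real.rpow_pos_of_pos hy0 _)))
  rw [smul_eq_mul, habs]
  have hxy : (x * y ^ α) ^ (2/α - 1) = x ^ (2/α - 1) * y ^ (2 - α) := by
    rw [Real.mul_rpow hx.le (Real.rpow_pos_of_pos hy0 α).le,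
      ← Real.rpow_mul hy0.le]
    congr 2
    field_simp
  rw [hxy]
  have h1 : x * x ^ (2/α - 1) = x ^ (2/α) := by
    nth_rewrite 1 [← Real.rpow_one x]
    rw [← Real.rpow_add hx]; ring_nf
  have h2 : y ^ (α - 1) * y ^ (2 - α) = y := by
    rw [← Real.rpow_add hy0]; norm_num
  calc x * (α * y ^ (α - 1)) * (x ^ (2/α - 1) * y ^ (2 - α) * Real.exp (-(x * y ^ α)))
      = α * (x * x ^ (2/α - 1)) * (y ^ (α - 1) * y ^ (2 - α)) * Real.exp (-(x * y ^ α)) := by ring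
    _ = α * x ^ (2/α) * (y * Real.exp (-(x * y ^ α))) := by rw [h1, h2]; ring

lemma polar_lemma (ρ α x : ℝ) (hρ : 0 < ρ) :
    ∫ p in Metric.ball (0 : EuclideanSpace ℝ (Fin 2)) ρ, Real.exp (-(x * ‖p‖ ^ α)) =
      (2 * π) * ∫ y in Ioo (0:ℝ) ρ, y * Real.exp (-(x * y ^ α)) := by
  set g : ℝ → ℝ := fun y => Real.exp (-(x * y ^ α)) with hg
  have h1 : ∫ p in Metric.ball (0 : EuclideanSpace ℝ (Fin 2)) ρ, g ‖p‖ =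
      ∫ p : EuclideanSpace ℝ (Fin 2), (Set.Iio ρ).indicator g ‖p‖ := by
    rw [← integral_indicator measurableSet_ball]
    congr 1
    ext p
    by_cases hp : ‖p‖ < ρ
    · simp [Set.indicator, hp, mem_ball_zero_iff]
    · simp [Set.indicator, hp, mem_ball_zero_iff]
  have hdim : Module.finrank ℝ (EuclideanSpace ℝ (Fin 2)) = 2 := by
    simp [finrank_euclideanSpace]
  have hvol : (volume (Metric.ball (0 : EuclideanSpace ℝ (Fin 2)) 1)).toReal = π := by
    rw [EuclideanSpace.volume_ball]
    rw [show ((Fintype.card (Fin 2) : ℝ)/2 + 1) = 2 by simp; norm_num]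
    simp [Real.Gamma_two, Real.sq_sqrt Real.pi_nonneg]
    exact Real.pi_nonneg
  rw [h1, integral_fun_norm_addHaar volume ((Set.Iio ρ).indicator g), hdim, measureReal_def, hvol]
  have h2 : ∀ y : ℝ, y ^ (2 - 1) • (Set.Iio ρ).indicator g y =
      (Set.Iio ρ).indicator (fun y => y * g y) y := by
    intro y
    by_cases hy : y < ρ
    · simp [Set.indicator, hy]
    · simp [Set.indicator, hy]
  rw [show (∫ y in Set.Ioi (0:ℝ), y ^ (2-1) • (Set.Iio ρ).indicator g y) =
      ∫ y in Set.Ioi (0:ℝ), (Set.Iio ρ).indicator (fun y => y * g y) y from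
    integral_congr_ae (Filter.Eventually.of_forall h2),
    integral_indicator measurableSet_Iio, Measure.restrict_restrict measurableSet_Iio]
  have h3 : Set.Iio ρ ∩ Set.Ioi 0 = Set.Ioo (0:ℝ) ρ := by ext t; simp [and_comm]
  rw [h3]
  simp [smul_eq_mul]
  ring

end AuxLemmas

section Main
open Set

/-- CDF of `u = h/(1+d^α)` where `h ~ Exp(1)` and `d` is the distance from the
center of a uniformly random point in a disc of radius `ρ`:
`F_u(x) = 1 − (δ/ρ²) e^{−x} γ(δ, x ρ^α)/x^δ` with `δ = 2/α`. -/
theorem stmt_1 (ρ α x : ℝ) (hρ : 0 < ρ) (hα : 2 < α) (hx : 0 < x) :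
    ((expMeasure.prod (unifDisc ρ))
        {q : ℝ × EuclideanSpace ℝ (Fin 2) | q.1 / (1 + ‖q.2‖ ^ α) < x}).toReal =
      1 - ((2 / α) / ρ ^ 2) * Real.exp (-x) * lowerGamma (2 / α) (x * ρ ^ α) / x ^ (2 / α) := by

  have hα0 : (0:ℝ) < α := by linarith
  haveI : SFinite expMeasure :=
    inferInstanceAs (SFinite ((volume.restrict (Set.Ioi (0:ℝ))).withDensity
      fun t => ENNReal.ofReal (Real.exp (-t))))
  haveI : SFinite (unifDisc ρ) :=
    inferInstanceAs (SFinite ((ENNReal.ofReal (Real.pi * ρ ^ 2))⁻¹ •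
      volume.restrict (Metric.ball 0 ρ)))
  have hcont : Continuous fun y : ℝ => y ^ α :=
    continuous_iff_continuousAt.2 fun y => Real.continuousAt_rpow_const y α (Or.inr hα0.le)
  have hden : ∀ p : EuclideanSpace ℝ (Fin 2), 0 < 1 + ‖p‖ ^ α := fun p => by
    have := Real.rpow_nonneg (norm_nonneg p) α; linarith
  -- measurability of the event
  have hmeas : MeasurableSet {q : ℝ × EuclideanSpace ℝ (Fin 2) | q.1 / (1 + ‖q.2‖ ^ α) < x} := by
    apply measurableSet_lt _ measurable_const
    exact measurable_fst.div ((measurable_const.add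
      ((hcont.comp continuous_norm).measurable.comp measurable_snd)))
  -- sections
  have hsec : ∀ p : EuclideanSpace ℝ (Fin 2),
      ((fun h : ℝ => (h, p)) ⁻¹' {q : ℝ × EuclideanSpace ℝ (Fin 2) | q.1 / (1 + ‖q.2‖ ^ α) < x})
        = Set.Iio (x * (1 + ‖p‖ ^ α)) := by
    intro p
    ext h
    simp only [Set.mem_preimage, Set.mem_setOf_eq, Set.mem_Iio]
    rw [div_lt_iff₀ (hden p), mul_comm]
  have hprod : (expMeasure.prod (unifDisc ρ))
        {q : ℝ × EuclideanSpace ℝ (Fin 2) | q.1 / (1 + ‖q.2‖ ^ α) < x} =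
      ∫⁻ p, ENNReal.ofReal (1 - Real.exp (-(x * (1 + ‖p‖ ^ α)))) ∂(unifDisc ρ) := by
    rw [Measure.prod_apply_symm hmeas]
    congr 1
    ext p
    rw [hsec p, expMeasure_Iio (by positivity)]
  rw [hprod]
  -- compute the lintegral over unifDisc
  set f : EuclideanSpace ℝ (Fin 2) → ℝ := fun p => 1 - Real.exp (-(x * (1 + ‖p‖ ^ α))) with hf
  have hf_nonneg : ∀ p, 0 ≤ f p := fun p => by
    have h2 : (0:ℝ) ≤ x * (1 + ‖p‖ ^ α) := mul_nonneg hx.le (hden p).le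
    have h1 : Real.exp (-(x * (1 + ‖p‖ ^ α))) ≤ 1 := Real.exp_le_one_iff.2 (by linarith)
    simp only [hf]; linarith
  have hf_meas : Measurable f :=
    (measurable_const.sub ((measurable_const.mul (measurable_const.add
      ((hcont.comp continuous_norm).measurable))).neg.exp))
  have hf_int : IntegrableOn f (Metric.ball (0 : EuclideanSpace ℝ (Fin 2)) ρ) := by
    refine Integrable.mono' (g := fun _ => (1:ℝ))
      (integrableOn_const measure_ball_lt_top.ne) hf_meas.aestronglyMeasurable ?_
    filter_upwards with p
    rw [Real.norm_eq_abs, abs_of_nonneg (hf_nonneg p)]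
    have : 0 < Real.exp (-(x * (1 + ‖p‖ ^ α))) := Real.exp_pos _
    simp [hf]; linarith
  have hlint : ∫⁻ p, ENNReal.ofReal (f p) ∂(unifDisc ρ) =
      (ENNReal.ofReal (π * ρ ^ 2))⁻¹ * ENNReal.ofReal
        (∫ p in Metric.ball (0 : EuclideanSpace ℝ (Fin 2)) ρ, f p) := by
    rw [unifDisc, lintegral_smul_measure,
      ← ofReal_integral_eq_lintegral_ofReal hf_int
        (Filter.Eventually.of_forall hf_nonneg), smul_eq_mul]
  rw [hlint]
  -- compute the real integral over the ball
  have hvol : volume (Metric.ball (0 : EuclideanSpace ℝ (Fin 2)) ρ) =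
      ENNReal.ofReal (π * ρ ^ 2) := by
    rw [EuclideanSpace.volume_ball]
    rw [show ((Fintype.card (Fin 2) : ℝ)/2 + 1) = 2 by simp; norm_num]
    simp [Real.Gamma_two, Real.sq_sqrt Real.pi_nonneg]
    rw [← ENNReal.ofReal_pow hρ.le, ← ENNReal.ofReal_mul (by positivity)]
    ring_nf
  have hg_int : IntegrableOn (fun p : EuclideanSpace ℝ (Fin 2) =>
      Real.exp (-(x * (1 + ‖p‖ ^ α)))) (Metric.ball 0 ρ) := by
    refine Integrable.mono' (g := fun _ => (1:ℝ))
      (integrableOn_const measure_ball_lt_top.ne)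
      (measurable_const.mul (measurable_const.add
        ((hcont.comp continuous_norm).measurable))).neg.exp.aestronglyMeasurable ?_
    filter_upwards with p
    rw [Real.norm_eq_abs, abs_of_pos (Real.exp_pos _), Real.exp_le_one_iff]
    have h2 : (0:ℝ) ≤ x * (1 + ‖p‖ ^ α) := mul_nonneg hx.le (hden p).le
    linarith
  have hI : ∫ p in Metric.ball (0 : EuclideanSpace ℝ (Fin 2)) ρ, f p =
      π * ρ ^ 2 - Real.exp (-x) * ((2 * π) *
        ∫ y in Ioo (0:ℝ) ρ, y * Real.exp (-(x * y ^ α))) := by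
    rw [hf]
    rw [integral_sub (integrableOn_const (C := (1:ℝ)) measure_ball_lt_top.ne) hg_int]
    rw [setIntegral_const, measureReal_def, hvol, ENNReal.toReal_ofReal (by positivity), smul_eq_mul, mul_one]
    congr 1
    rw [← polar_lemma ρ α x hρ, ← integral_const_mul]
    refine setIntegral_congr_fun measurableSet_ball fun p _ => ?_
    rw [← Real.exp_add]
    congr 1
    ring
  rw [hI]
  -- relate lowerGamma to the Ioo integral
  have hγ : lowerGamma (2/α) (x * ρ ^ α) =
      (α * x ^ (2/α)) * ∫ y in Ioo (0:ℝ) ρ, y * Real.exp (-(x * y ^ α)) := by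
    rw [lowerGamma, intervalIntegral.integral_of_le (by positivity),
      integral_Ioc_eq_integral_Ioo, subst_lemma ρ α x hρ hα hx]
  -- set I := the Ioo integral, nonneg
  set I : ℝ := ∫ y in Ioo (0:ℝ) ρ, y * Real.exp (-(x * y ^ α)) with hIdef
  have hI_nonneg : 0 ≤ π * ρ ^ 2 - Real.exp (-x) * (2 * π * I) := by
    rw [← hI]
    exact integral_nonneg hf_nonneg
  -- final toReal computation
  rw [ENNReal.toReal_mul, ENNReal.toReal_inv, ENNReal.toReal_ofReal (by positivity),
    ENNReal.toReal_ofReal hI_nonneg, hγ]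
  have hxδ : (0:ℝ) < x ^ (2/α) := Real.rpow_pos_of_pos hx _
  field_simp

end Main
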